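/- arXiv:1008.2163 — 5 statements merged into one kernel-verified Lean document; each statement's English description precedes it below -/
import Mathlib

section
/- If ξ is an element of an overring of a ring R with identity, ξ commutes with all elements of R, and f = X^n + a_{n-1}X^{n-1} + ... + a_1 X + a_0 ∈ R[X] is the minimal polynomial of ξ over R (i.e., f(ξ) = 0 but ξ is not a root of any nonzero polynomial in R[X] of degree less than n), then each coefficient a_i of f belongs to the center of R. -/
open Polynomial

/-- If ξ in an overring S of a ring R commutes with (the image of) every
element of R, and f ∈ R[X] is a monic polynomial of degree n with f(ξ) = 0 such that no
nonzero polynomial of degree < n annihilates ξ (i.e. f is the minimal polynomial of ξ),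
then every coefficient of f lies in the center of R. -/
theorem coeffs_of_minimal_poly_central
    {R S : Type*} [Ring R] [Ring S] (φ : R →+* S) (hφ : Function.Injective φ)
    (ξ : S) (hcomm : ∀ r : R, Commute (φ r) ξ)
    (f : R[X]) (n : ℕ) (hf : f.Monic) (hdeg : f.natDegree = n)
    (hroot : Polynomial.eval₂ φ ξ f = 0)
    (hmin : ∀ g : R[X], g ≠ 0 → Polynomial.eval₂ φ ξ g = 0 → n ≤ g.natDegree) :
    ∀ i : ℕ, f.coeff i ∈ Set.center R := by
  intro i
  rw [Semigroup.mem_center_iff]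
  intro r
  set g : R[X] := C r * f - f * C r with hg
  have hgcoeff : ∀ j, g.coeff j = r * f.coeff j - f.coeff j * r := by
    intro j
    simp [hg, coeff_C_mul, coeff_mul_C]
  have hghigh : ∀ j, n ≤ j → g.coeff j = 0 := by
    intro j hj
    rcases eq_or_lt_of_le hj with h | h
    · rw [hgcoeff, ← h, ← hdeg, hf.coeff_natDegree]; simp
    · rw [hgcoeff, coeff_eq_zero_of_natDegree_lt (hdeg ▸ h)]; simp
  have hgeval : Polynomial.eval₂ φ ξ g = 0 := by
    let E := Polynomial.eval₂RingHom' φ ξ hcomm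
    show E g = 0
    rw [hg, map_sub, map_mul, map_mul]
    have hCr : E (C r) = φ r := eval₂_C φ ξ
    have hEf : E f = 0 := hroot
    rw [hCr, hEf, mul_zero, zero_mul, sub_zero]
  have hg0 : g = 0 := by
    by_contra h
    have hn := hmin g h hgeval
    have := hghigh g.natDegree hn
    exact (Polynomial.leadingCoeff_ne_zero.mpr h) this
  have := hgcoeff i
  rw [hg0, Polynomial.coeff_zero] at this
  exact sub_eq_zero.mp this.symm
end

section
/- Let R be a commutative ring, f ∈ R[X] monic of degree n with companion matrix C. For A = p(C) and B = q(C) with p, q ∈ R[X] of degree < n, one has [AB] = (I C C^2 ... C^{n-1}) ([A] ⊗ [B]), where (I C ... C^{n-1}) is the n × n² block matrix with blocks the powers of C, and [A] ⊗ [B] ∈ R^{n²} is the Kronecker product whose (i + n(j-1))-th entry is [A]_i [B]_j. -/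
open Polynomial Matrix

/-- The companion matrix of a (monic, degree n) polynomial f:
columns C·e_j = e_{j+1} for j < n-1, and last column = -(coefficients of f). -/
def companionM {R : Type*} [CommRing R] (n : ℕ) (f : R[X]) : Matrix (Fin n) (Fin n) R :=
  fun i j => if (j : ℕ) = n - 1 then -f.coeff i else if (i : ℕ) = (j : ℕ) + 1 then 1 else 0

/-- Left Kronecker product of two vectors in R^n, as a vector in R^{n²}
indexed by Fin n × Fin n; block p.2 of the result is x · y_{p.2}. -/
def kron {R : Type*} [CommRing R] {n : ℕ} (x y : Fin n → R) : Fin n × Fin n → R :=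
  fun p => x p.1 * y p.2

/-- The n × n² block matrix (I C C² ... C^{n-1}). -/
def powBlocks {R : Type*} [CommRing R] {n : ℕ} (C : Matrix (Fin n) (Fin n) R) :
    Matrix (Fin n) (Fin n × Fin n) R :=
  fun i p => (C ^ (p.2 : ℕ)) i p.1

/-- The coefficient vector in R^n of a polynomial (of degree < n). -/
def coeffVec {R : Type*} [CommRing R] (n : ℕ) (p : R[X]) : Fin n → R := fun i => p.coeff i

/-- Powers of the companion matrix applied to e₁ give the standard basis. -/
lemma companion_pow_e1 {R : Type*} [CommRing R] {n : ℕ} (hn : 0 < n) (f : R[X]) :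
    ∀ j : ℕ, j < n → ∀ k : Fin n,
      ((companionM n f) ^ j) k ⟨0, hn⟩ = if (k : ℕ) = j then 1 else 0 := by
  intro j
  induction j with
  | zero =>
    intro _ k
    simp [Matrix.one_apply, Fin.ext_iff]
  | succ j ih =>
    intro hj k
    have hj' : j < n := Nat.lt_of_succ_lt hj
    rw [pow_succ', Matrix.mul_apply]
    rw [Finset.sum_eq_single (⟨j, hj'⟩ : Fin n)]
    · rw [ih hj' ⟨j, hj'⟩]
      have hjne : j ≠ n - 1 := by omega
      simp [companionM, hjne]
    · intro m _ hm
      rw [ih hj' m]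
      have : (m : ℕ) ≠ j := by
        intro h; exact hm (Fin.ext h)
      simp [this]
    · intro h; exact absurd (Finset.mem_univ _) h

/-- For A = p(C), B = q(C) with deg p, deg q < n,
[AB] = (I C ... C^{n-1})([A] ⊗ [B]). -/
theorem product_formula_matrices
    {R : Type*} [CommRing R] (n : ℕ) (hn : 0 < n) (f : R[X])
    (hf : f.Monic) (hdeg : f.natDegree = n)
    (C : Matrix (Fin n) (Fin n) R) (hC : C = companionM n f)
    (p q : R[X]) (hp : p.degree < n) (hq : q.degree < n)
    (A B : Matrix (Fin n) (Fin n) R) (hA : A = aeval C p) (hB : B = aeval C q) :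
    (fun i => (A * B) i ⟨0, hn⟩) =
      (powBlocks C).mulVec (kron (fun i => A i ⟨0, hn⟩) (fun i => B i ⟨0, hn⟩)) := by
  have comm : ∀ j : ℕ, C ^ j * A = A * C ^ j := by
    intro j
    rw [hA, show C ^ j = aeval C (X ^ j) from (aeval_X_pow (R := R) (x := C)).symm,
      ← _root_.map_mul, ← _root_.map_mul, mul_comm]
  funext i
  simp only [Matrix.mulVec, dotProduct, powBlocks, kron]
  rw [Fintype.sum_prod_type_right]
  have key : ∀ j : Fin n,
      (∑ k : Fin n, (C ^ (j : ℕ)) i k * (A k ⟨0, hn⟩ * B j ⟨0, hn⟩)) =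
        A i j * B j ⟨0, hn⟩ := by
    intro j
    have h1 : (∑ k : Fin n, (C ^ (j : ℕ)) i k * A k ⟨0, hn⟩) = A i j := by
      have : (C ^ (j : ℕ) * A) i ⟨0, hn⟩ = (A * C ^ (j : ℕ)) i ⟨0, hn⟩ := by
        rw [comm]
      rw [Matrix.mul_apply, Matrix.mul_apply] at this
      rw [this]
      rw [Finset.sum_congr rfl (fun k _ => by
        rw [hC, companion_pow_e1 hn f (j : ℕ) j.isLt k])]
      simp [Fin.val_inj]
    calc (∑ k : Fin n, (C ^ (j : ℕ)) i k * (A k ⟨0, hn⟩ * B j ⟨0, hn⟩))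
        = (∑ k : Fin n, (C ^ (j : ℕ)) i k * A k ⟨0, hn⟩) * B j ⟨0, hn⟩ := by
          rw [Finset.sum_mul]; exact Finset.sum_congr rfl fun k _ => (mul_assoc _ _ _).symm
      _ = A i j * B j ⟨0, hn⟩ := by rw [h1]
  rw [Finset.sum_congr rfl fun j _ => key j, Matrix.mul_apply]
end

section
/- Let R be a commutative ring, S a commutative R-algebra, ξ ∈ S such that 1, ξ, ..., ξ^{n-1} is an R-basis of R[ξ] and f(ξ) = 0 where f ∈ R[X] is monic of degree n with companion matrix C. If α, β ∈ R[ξ] have coordinate vectors [α], [β] ∈ R^n relative to this basis, then the coordinate vector of the product satisfies [αβ] = (I C ... C^{n-1})([α] ⊗ [β]). -/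
open Polynomial Matrix

lemma xi_pow_n {R S : Type*} [CommRing R] [CommRing S] [Algebra R S]
    (n : ℕ) (ξ : S) (f : R[X]) (hf : f.Monic) (hdeg : f.natDegree = n)
    (hroot : aeval ξ f = 0) :
    ξ ^ n = - ∑ i ∈ Finset.range n, f.coeff i • ξ ^ i := by
  have h := Polynomial.aeval_eq_sum_range (R := R) (S := S) (x := ξ) (p := f)
  rw [hdeg, Finset.sum_range_succ, hroot] at h
  have hc : f.coeff n = 1 := by rw [← hdeg]; exact hf.coeff_natDegree
  rw [hc, one_smul] at h
  exact eq_neg_of_add_eq_zero_right h.symm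

lemma companion_col {R S : Type*} [CommRing R] [CommRing S] [Algebra R S]
    (n : ℕ) (ξ : S) (f : R[X]) (hf : f.Monic) (hdeg : f.natDegree = n)
    (hroot : aeval ξ f = 0) (j : Fin n) :
    ∑ i : Fin n, companionM n f i j • ξ ^ (i : ℕ) = ξ ^ ((j : ℕ) + 1) := by
  have hn : 0 < n := j.pos
  by_cases hj : (j : ℕ) = n - 1
  · have hjn : (j : ℕ) + 1 = n := by omega
    rw [hjn, xi_pow_n n ξ f hf hdeg hroot,
      ← Fin.sum_univ_eq_sum_range (fun i => f.coeff i • ξ ^ i) n]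
    simp [companionM, hj, neg_smul, Finset.sum_neg_distrib]
  · have hlt : (j : ℕ) + 1 < n := by omega
    rw [Finset.sum_eq_single (⟨(j : ℕ) + 1, hlt⟩ : Fin n)]
    · simp [companionM, hj]
    · intro i _ hi
      have : (i : ℕ) ≠ (j : ℕ) + 1 := by
        intro h; apply hi; exact Fin.ext h
      simp [companionM, hj, this]
    · intro h; exact absurd (Finset.mem_univ _) h

lemma pow_col {R S : Type*} [CommRing R] [CommRing S] [Algebra R S]
    (n : ℕ) (ξ : S) (f : R[X]) (hf : f.Monic) (hdeg : f.natDegree = n)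
    (hroot : aeval ξ f = 0) (m : ℕ) (k : Fin n) :
    ∑ i : Fin n, ((companionM n f) ^ m) i k • ξ ^ (i : ℕ) = ξ ^ (m + (k : ℕ)) := by
  induction m with
  | zero => simp [Matrix.one_apply, Fin.val_eq_val, Finset.sum_ite_eq']
  | succ m ih =>
    rw [pow_succ']
    have step : ∀ i : Fin n, (companionM n f * companionM n f ^ m) i k
        = ∑ j : Fin n, companionM n f i j * (companionM n f ^ m) j k :=
      fun i => Matrix.mul_apply
    calc ∑ i : Fin n, (companionM n f * companionM n f ^ m) i k • ξ ^ (i : ℕ)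
        = ∑ i : Fin n, ∑ j : Fin n,
            ((companionM n f ^ m) j k • (companionM n f i j • ξ ^ (i : ℕ))) := by
          refine Finset.sum_congr rfl fun i _ => ?_
          rw [step i, Finset.sum_smul]
          refine Finset.sum_congr rfl fun j _ => ?_
          rw [smul_smul, mul_comm]
      _ = ∑ j : Fin n, (companionM n f ^ m) j k •
            (∑ i : Fin n, companionM n f i j • ξ ^ (i : ℕ)) := by
          rw [Finset.sum_comm]
          exact Finset.sum_congr rfl fun j _ => (Finset.smul_sum).symm
      _ = ∑ j : Fin n, (companionM n f ^ m) j k • (ξ * ξ ^ (j : ℕ)) := by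
          refine Finset.sum_congr rfl fun j _ => ?_
          rw [companion_col n ξ f hf hdeg hroot j, pow_succ, mul_comm]
      _ = ξ * ∑ j : Fin n, (companionM n f ^ m) j k • ξ ^ (j : ℕ) := by
          rw [Finset.mul_sum]
          exact Finset.sum_congr rfl fun j _ => (mul_smul_comm _ _ _).symm
      _ = ξ ^ (m + 1 + (k : ℕ)) := by
          rw [ih]; ring

/-- Theorem 1 of the paper, commutative version: if 1, ξ, ..., ξ^{n-1} is an
R-basis of R[ξ] (expressed as linear independence; they span any element written in them)
and f(ξ) = 0 with f monic of degree n and companion matrix C, then the coordinate vector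
of a product is given by [αβ] = (I C ... C^{n-1})([α] ⊗ [β]). -/
theorem product_formula_simple_extension
    {R S : Type*} [CommRing R] [CommRing S] [Algebra R S]
    (n : ℕ) (ξ : S) (f : R[X]) (hf : f.Monic) (hdeg : f.natDegree = n)
    (hroot : aeval ξ f = 0)
    (hbasis : LinearIndependent R (fun i : Fin n => ξ ^ (i : ℕ)))
    (C : Matrix (Fin n) (Fin n) R) (hC : C = companionM n f)
    (a b c : Fin n → R)
    (hmul : (∑ i : Fin n, a i • ξ ^ (i : ℕ)) * (∑ i : Fin n, b i • ξ ^ (i : ℕ))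
            = ∑ i : Fin n, c i • ξ ^ (i : ℕ)) :
    c = (powBlocks C).mulVec (kron a b) := by
  subst hC
  have key : ∑ i : Fin n, ((powBlocks (companionM n f)).mulVec (kron a b)) i • ξ ^ (i : ℕ)
      = ∑ i : Fin n, c i • ξ ^ (i : ℕ) := by
    calc ∑ i : Fin n, ((powBlocks (companionM n f)).mulVec (kron a b)) i • ξ ^ (i : ℕ)
        = ∑ i : Fin n, ∑ p : Fin n × Fin n,
            (kron a b p) • (((companionM n f) ^ (p.2 : ℕ)) i p.1 • ξ ^ (i : ℕ)) := by
          refine Finset.sum_congr rfl fun i _ => ?_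
          rw [Matrix.mulVec, dotProduct, Finset.sum_smul]
          refine Finset.sum_congr rfl fun p _ => ?_
          rw [smul_smul, mul_comm]
          rfl
      _ = ∑ p : Fin n × Fin n, (kron a b p) •
            (∑ i : Fin n, ((companionM n f) ^ (p.2 : ℕ)) i p.1 • ξ ^ (i : ℕ)) := by
          rw [Finset.sum_comm]
          exact Finset.sum_congr rfl fun p _ => (Finset.smul_sum).symm
      _ = ∑ p : Fin n × Fin n, (a p.1 * b p.2) • ξ ^ ((p.2 : ℕ) + (p.1 : ℕ)) := by
          refine Finset.sum_congr rfl fun p _ => ?_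
          rw [pow_col n ξ f hf hdeg hroot (p.2 : ℕ) p.1]
          rfl
      _ = ∑ p : Fin n × Fin n, (a p.1 • ξ ^ (p.1 : ℕ)) * (b p.2 • ξ ^ (p.2 : ℕ)) := by
          refine Finset.sum_congr rfl fun p _ => ?_
          rw [smul_mul_smul_comm, pow_add, mul_comm (ξ ^ (p.2 : ℕ))]
      _ = (∑ i : Fin n, a i • ξ ^ (i : ℕ)) * (∑ i : Fin n, b i • ξ ^ (i : ℕ)) := by
          rw [Finset.sum_mul_sum, Fintype.sum_prod_type]
      _ = ∑ i : Fin n, c i • ξ ^ (i : ℕ) := hmul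
  have hzero : ∑ i : Fin n,
      (c i - ((powBlocks (companionM n f)).mulVec (kron a b)) i) • ξ ^ (i : ℕ) = 0 := by
    simp only [sub_smul, Finset.sum_sub_distrib, key, sub_self]
  funext i
  have := Fintype.linearIndependent_iff.mp hbasis
    (fun i => c i - ((powBlocks (companionM n f)).mulVec (kron a b)) i) hzero i
  exact sub_eq_zero.mp this
end

section
/- Let R be a commutative ring, f ∈ R[X] monic of degree n with companion matrix C. The map R^n → M_n(R) sending x to the matrix whose j-th column is C^{j-1} x is injective, R-linear, and its image is exactly the set of matrices of the form p(C) with p ∈ R[X] of degree < n; moreover with the product x · y := (I C ... C^{n-1})(x ⊗ y), R^n becomes a (commutative, associative, unital) R-algebra isomorphic to R[X]/(f). -/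
open Polynomial Matrix

namespace RnAlgAux

variable {R : Type*} [CommRing R] {n : ℕ}

noncomputable def pOf (x : Fin n → R) : R[X] := ∑ i : Fin n, Polynomial.C (x i) * X ^ (i : ℕ)

lemma coeff_pOf (x : Fin n → R) (k : ℕ) :
    (pOf x).coeff k = if h : k < n then x ⟨k, h⟩ else 0 := by
  unfold pOf
  rw [finset_sum_coeff]
  simp only [coeff_C_mul, coeff_X_pow]
  split
  · next h =>
    rw [Finset.sum_eq_single (⟨k, h⟩ : Fin n)]
    · simp
    · intro b _ hb
      simp only [mul_ite, mul_one, mul_zero, ite_eq_right_iff]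
      intro hbk
      exact absurd (Fin.ext hbk.symm) hb
    · simp
  · next h =>
    apply Finset.sum_eq_zero
    intro b _
    have : (k : ℕ) ≠ (b : ℕ) := fun hh => h (hh ▸ b.isLt)
    simp [this]

lemma degree_pOf (x : Fin n → R) : (pOf x).degree < (n : ℕ) := by
  rw [degree_lt_iff_coeff_zero]
  intro m hm
  rw [coeff_pOf]
  have : ¬ m < n := by exact_mod_cast not_lt.2 hm
  simp [this]

lemma pOf_coeffVec {q : R[X]} (hq : q.natDegree < n) : pOf (coeffVec n q) = q := by
  unfold pOf coeffVec
  rw [Fin.sum_univ_eq_sum_range (fun i => Polynomial.C (q.coeff i) * X ^ i)]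
  simp_rw [C_mul_X_pow_eq_monomial]
  exact (as_sum_range' q n hq).symm

lemma sum_mulVec {ι : Type*} (s : Finset ι) (A : ι → Matrix (Fin n) (Fin n) R)
    (v : Fin n → R) : (∑ i ∈ s, A i).mulVec v = ∑ i ∈ s, (A i).mulVec v := by
  funext j
  simp only [mulVec, dotProduct, Matrix.sum_apply, Finset.sum_mul, Finset.sum_apply]
  rw [Finset.sum_comm]

lemma mulVec_single' (A : Matrix (Fin n) (Fin n) R) (j : Fin n) :
    A.mulVec (Pi.single j 1) = fun i => A i j := by
  funext i
  simp [Matrix.mulVec_single]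

variable (hn : 0 < n) (f : R[X])

lemma pow_mulVec_e0 (j : Fin n) :
    (companionM n f ^ (j : ℕ)).mulVec (Pi.single (⟨0, hn⟩ : Fin n) 1) = Pi.single j 1 := by
  obtain ⟨k, hk⟩ := j
  induction k with
  | zero => rw [Fin.val_mk, pow_zero, Matrix.one_mulVec]
  | succ k ih =>
    have hk' : k < n := Nat.lt_of_succ_lt hk
    have hkn : k ≠ n - 1 := by omega
    rw [pow_succ', ← Matrix.mulVec_mulVec, ih hk', mulVec_single']
    funext i
    simp [companionM, Pi.single_apply, Fin.ext_iff, hkn]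

lemma pow_n_mulVec_e0 :
    (companionM n f ^ n).mulVec (Pi.single (⟨0, hn⟩ : Fin n) 1) = fun i : Fin n => -f.coeff (i : ℕ) := by
  have h1 : n - 1 < n := Nat.pred_lt hn.ne'
  have h2 : companionM n f * companionM n f ^ (n - 1) = companionM n f ^ n := by
    rw [← pow_succ', Nat.sub_add_cancel hn]
  rw [← h2, ← Matrix.mulVec_mulVec,
    pow_mulVec_e0 hn f ⟨n - 1, h1⟩, mulVec_single']
  funext i
  simp [companionM]

lemma aeval_pOf_mulVec_e0 (x : Fin n → R) :
    (aeval (companionM n f) (pOf x)).mulVec (Pi.single (⟨0, hn⟩ : Fin n) 1) = x := by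
  unfold pOf
  rw [map_sum]
  simp only [_root_.map_mul, aeval_C, aeval_X_pow]
  rw [sum_mulVec]
  have : ∀ i : Fin n,
      ((algebraMap R (Matrix (Fin n) (Fin n) R)) (x i) * companionM n f ^ (i : ℕ)).mulVec
        (Pi.single (⟨0, hn⟩ : Fin n) 1) = Pi.single i (x i) := by
    intro i
    rw [← Algebra.smul_def, Matrix.smul_mulVec, pow_mulVec_e0 hn f i]
    funext j
    simp [Pi.single_apply]
  simp_rw [this]
  exact Finset.univ_sum_single x

include hn in
lemma aeval_self (hf : f.Monic) (hdeg : f.natDegree = n) :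
    aeval (companionM n f) f = 0 := by
  set C := companionM n f with hC
  have he0 : (aeval C f).mulVec (Pi.single (⟨0, hn⟩ : Fin n) 1) = 0 := by
    conv_lhs => rw [as_sum_range' f (n + 1) (by omega)]
    rw [map_sum]
    simp only [aeval_monomial]
    rw [sum_mulVec, Finset.sum_range_succ]
    have hfn : f.coeff n = 1 := by
      rw [← hdeg]; exact hf.coeff_natDegree
    rw [hfn]
    simp only [_root_.map_one, one_mul]
    rw [pow_n_mulVec_e0 hn f]
    have : ∀ i ∈ Finset.range n,
        ((algebraMap R (Matrix (Fin n) (Fin n) R)) (f.coeff i) * C ^ i).mulVec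
          (Pi.single (⟨0, hn⟩ : Fin n) 1)
        = (fun k : Fin n => if (k : ℕ) = i then f.coeff i else 0) := by
      intro i hi
      have hi' : i < n := Finset.mem_range.mp hi
      rw [← Algebra.smul_def, Matrix.smul_mulVec, pow_mulVec_e0 hn f ⟨i, hi'⟩]
      funext k
      simp [Pi.single_apply, Fin.ext_iff]
    rw [Finset.sum_congr rfl this]
    funext k
    simp only [Pi.add_apply, Finset.sum_apply, Pi.zero_apply]
    rw [Finset.sum_ite_eq (Finset.range n) (k : ℕ) (fun i => f.coeff i)]
    simp [k.isLt]
  have hcomm : ∀ j : ℕ, aeval C f * C ^ j = C ^ j * aeval C f := by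
    intro j
    have : C ^ j = aeval C ((X : R[X]) ^ j) := by simp
    rw [this, ← _root_.map_mul, ← _root_.map_mul, mul_comm]
  funext i j
  have : (aeval C f) i j = ((aeval C f).mulVec (Pi.single j 1)) i := by
    rw [mulVec_single']
  rw [this, ← pow_mulVec_e0 hn f j, Matrix.mulVec_mulVec, hcomm,
    ← Matrix.mulVec_mulVec, he0]
  simp [Matrix.mulVec_zero]

lemma col_aeval (g : R[X]) (j : Fin n) :
    (fun i => (aeval (companionM n f) g) i j)
      = (companionM n f ^ (j : ℕ)).mulVec
          ((aeval (companionM n f) g).mulVec (Pi.single (⟨0, hn⟩ : Fin n) 1)) := by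
  set C := companionM n f with hC
  have hcomm : aeval C g * C ^ (j : ℕ) = C ^ (j : ℕ) * aeval C g := by
    have : C ^ (j : ℕ) = aeval C ((X : R[X]) ^ (j : ℕ)) := by simp
    rw [this, ← _root_.map_mul, ← _root_.map_mul, mul_comm]
  rw [← mulVec_single' (aeval C g) j, ← pow_mulVec_e0 hn f j,
    Matrix.mulVec_mulVec, hcomm, ← Matrix.mulVec_mulVec]

lemma mul_eq (Cm : Matrix (Fin n) (Fin n) R) (x y : Fin n → R) :
    (powBlocks Cm).mulVec (kron x y)
      = (Matrix.of fun i j : Fin n => ((Cm ^ (j : ℕ)).mulVec x) i).mulVec y := by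
  funext i
  simp only [mulVec, dotProduct, powBlocks, kron, Matrix.of_apply]
  rw [Fintype.sum_prod_type, Finset.sum_comm]
  simp_rw [Finset.sum_mul, mul_assoc]

end RnAlgAux

/-- the map x ↦ (matrix with j-th column C^j x) is injective and R-linear,
with image exactly {p(C) : deg p < n}; moreover the product x·y := (I C ... C^{n-1})(x⊗y)
makes R^n a commutative, associative, unital R-algebra isomorphic to R[X]/(f), the
isomorphism being induced by p ↦ coefficient vector of (p mod f). -/
theorem Rn_algebra_structure
    {R : Type*} [CommRing R] (n : ℕ) (hn : 0 < n) (f : R[X])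
    (hf : f.Monic) (hdeg : f.natDegree = n)
    (C : Matrix (Fin n) (Fin n) R) (hC : C = companionM n f)
    (M : (Fin n → R) → Matrix (Fin n) (Fin n) R)
    (hM : ∀ x, M x = fun (i j : Fin n) => ((C ^ (j : ℕ)).mulVec x) i)
    (mul : (Fin n → R) → (Fin n → R) → (Fin n → R))
    (hmul : ∀ x y, mul x y = (powBlocks C).mulVec (kron x y))
    (π : R[X] → (Fin n → R)) (hπ : ∀ p, π p = coeffVec n (p %ₘ f)) :
    -- M is injective and R-linear
    (Function.Injective M) ∧
    (∀ x y, M (x + y) = M x + M y) ∧ (∀ (r : R) x, M (r • x) = r • M x) ∧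
    -- image of M is exactly the polynomials in C of degree < n
    (Set.range M = {A | ∃ p : R[X], p.degree < n ∧ A = aeval C p}) ∧
    -- (R^n, ·) is a commutative associative unital R-algebra
    (∀ x y, mul x y = mul y x) ∧
    (∀ x y z, mul (mul x y) z = mul x (mul y z)) ∧
    (∀ x, mul (Pi.single (⟨0, hn⟩ : Fin n) (1 : R)) x = x) ∧
    (∀ x y z, mul x (y + z) = mul x y + mul x z) ∧
    (∀ (r : R) x y, mul (r • x) y = r • mul x y) ∧
    -- π induces an R-algebra isomorphism R[X]/(f) ≃ (R^n, ·)
    (∀ p q, π (p + q) = π p + π q) ∧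
    (∀ (r : R) p, π (Polynomial.C r * p) = r • π p) ∧
    (∀ p q, π (p * q) = mul (π p) (π q)) ∧
    (π 1 = Pi.single (⟨0, hn⟩ : Fin n) (1 : R)) ∧
    (∀ p, π p = 0 ↔ f ∣ p) ∧
    (Function.Surjective π) := by

  subst hC
  open RnAlgAux in
  set Cm := companionM n f with hCm
  set e0 : Fin n → R := Pi.single (⟨0, hn⟩ : Fin n) (1 : R) with he0
  -- basic facts that hold in any (even trivial) ring
  have hw : ∀ w : Fin n → R, (M w).mulVec e0 = w := by
    intro w
    rw [hM, he0]
    funext i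
    show (Matrix.of fun i j : Fin n => ((Cm ^ (j : ℕ)).mulVec w) i).mulVec
      (Pi.single (⟨0, hn⟩ : Fin n) (1:R)) i = w i
    rw [mulVec_single']
    simp
  have hMpoly : ∀ x, M x = aeval Cm (pOf x) := by
    intro x
    rw [hM]
    funext i j
    have h := col_aeval hn f (pOf x) j
    rw [aeval_pOf_mulVec_e0 hn f x] at h
    exact (congrFun h i).symm
  have hMA : ∀ g : R[X], M ((aeval Cm g).mulVec e0) = aeval Cm g := by
    intro g
    rw [hM]
    funext i j
    exact (congrFun (col_aeval hn f g j) i).symm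
  have hmul' : ∀ x y, mul x y = (M x).mulVec y := by
    intro x y
    rw [hmul, hM x]
    exact mul_eq Cm x y
  have hMinj : Function.Injective M := by
    intro x y h
    rw [← hw x, ← hw y, h]
  have hMadd : ∀ x y, M (x + y) = M x + M y := by
    intro x y
    rw [hM, hM, hM]
    funext i j
    simp [Matrix.mulVec_add, Matrix.add_apply]
    rfl
  have hMsmul : ∀ (r : R) x, M (r • x) = r • M x := by
    intro r x
    rw [hM, hM]
    funext i j
    simp [Matrix.mulVec_smul, Matrix.smul_apply]
    rfl
  have hxy : ∀ x y, mul x y = (aeval Cm (pOf x * pOf y)).mulVec e0 := by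
    intro x y
    rw [hmul' x y, hMpoly x]
    conv_lhs => rw [← hw y, hMpoly y]
    rw [Matrix.mulVec_mulVec, ← _root_.map_mul]
  have hMmul : ∀ x y, M (mul x y) = M x * M y := by
    intro x y
    rw [hxy x y, hMA, _root_.map_mul, hMpoly x, hMpoly y]
  have hcomm : ∀ x y, mul x y = mul y x := by
    intro x y
    rw [hxy x y, hxy y x, mul_comm (pOf x)]
  have hassoc : ∀ x y z, mul (mul x y) z = mul x (mul y z) := by
    intro x y z
    rw [hmul' (mul x y) z, hMmul, ← Matrix.mulVec_mulVec, ← hmul' y z, ← hmul' x (mul y z)]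
  have hMone : M e0 = 1 := by
    have h := hMA 1
    rw [_root_.map_one, Matrix.one_mulVec] at h
    exact h
  have hone : ∀ x, mul e0 x = x := by
    intro x
    rw [hmul', hMone, Matrix.one_mulVec]
  have hdistrib : ∀ x y z, mul x (y + z) = mul x y + mul x z := by
    intro x y z
    rw [hmul', hmul', hmul', Matrix.mulVec_add]
  have hsmul : ∀ (r : R) x y, mul (r • x) y = r • mul x y := by
    intro r x y
    rw [hmul', hmul', hMsmul, Matrix.smul_mulVec]
  have hrange : Set.range M = {A | ∃ p : R[X], p.degree < n ∧ A = aeval Cm p} := by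
    ext A
    constructor
    · rintro ⟨x, rfl⟩
      exact ⟨pOf x, degree_pOf x, hMpoly x⟩
    · rintro ⟨p, hp, rfl⟩
      refine ⟨coeffVec n p, ?_⟩
      rw [hMpoly]
      congr 1
      apply pOf_coeffVec
      by_cases h0 : p = 0
      · simpa [h0] using hn
      · exact (natDegree_lt_iff_degree_lt h0).mpr hp
  have hπadd : ∀ p q, π (p + q) = π p + π q := by
    intro p q
    rw [hπ, hπ, hπ]
    funext i
    simp [coeffVec, add_modByMonic]
  have hπsmul : ∀ (r : R) p, π (Polynomial.C r * p) = r • π p := by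
    intro r p
    rw [hπ, hπ]
    funext i
    rw [← smul_eq_C_mul, smul_modByMonic]
    simp [coeffVec]
  -- now split into the trivial and nontrivial cases for modByMonic facts
  rcases subsingleton_or_nontrivial R with hR | hR
  · refine ⟨hMinj, hMadd, hMsmul, hrange, hcomm, hassoc, hone, hdistrib, hsmul,
      hπadd, hπsmul, fun p q => Subsingleton.elim _ _, Subsingleton.elim _ _,
      fun p => ⟨fun _ => ⟨0, Subsingleton.elim _ _⟩, fun _ => Subsingleton.elim _ _⟩,
      fun x => ⟨0, Subsingleton.elim _ _⟩⟩
  · have hdf : f.degree = (n : ℕ) := by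
      rw [degree_eq_natDegree hf.ne_zero, hdeg]
    have hmodlt : ∀ p : R[X], (p %ₘ f).natDegree < n := by
      intro p
      by_cases h0 : p %ₘ f = 0
      · simpa [h0] using hn
      · rw [natDegree_lt_iff_degree_lt h0, ← hdf]
        exact degree_modByMonic_lt p hf
    have hπ' : ∀ p, π p = (aeval Cm p).mulVec e0 := by
      intro p
      rw [hπ]
      have h1 := aeval_pOf_mulVec_e0 hn f (coeffVec n (p %ₘ f))
      rw [pOf_coeffVec (hmodlt p)] at h1
      rw [← h1]
      conv_rhs => rw [← modByMonic_add_div p f]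
      rw [_root_.map_add, _root_.map_mul, aeval_self hn f hf hdeg, zero_mul, add_zero]
    have hπmul : ∀ p q, π (p * q) = mul (π p) (π q) := by
      intro p q
      rw [hmul' (π p) (π q), hπ' p, hMA p, hπ' (p * q), hπ' q,
        _root_.map_mul, ← Matrix.mulVec_mulVec]
    have hπone : π 1 = e0 := by
      rw [hπ' 1, _root_.map_one, Matrix.one_mulVec]
    have hπzero : ∀ p, π p = 0 ↔ f ∣ p := by
      intro p
      rw [← modByMonic_eq_zero_iff_dvd hf]
      constructor
      · intro h0
        rw [hπ] at h0
        rw [← pOf_coeffVec (hmodlt p), h0]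
        simp [pOf]
      · intro h0
        rw [hπ, h0]
        funext i
        simp [coeffVec]
    have hπsurj : Function.Surjective π := by
      intro x
      refine ⟨pOf x, ?_⟩
      rw [hπ]
      have hself : pOf x %ₘ f = pOf x := by
        rw [modByMonic_eq_self_iff hf, hdf]
        exact degree_pOf x
      rw [hself]
      funext i
      rw [coeffVec, coeff_pOf]
      simp [i.isLt]
    exact ⟨hMinj, hMadd, hMsmul, hrange, hcomm, hassoc, hone, hdistrib, hsmul,
      hπadd, hπsmul, hπmul, hπone, hπzero, hπsurj⟩
end

section
/- Let R be a commutative ring, f ∈ R[X] monic of degree n with companion matrix C. Define a binary operation on R^n by x · y := (I C ... C^{n-1})(x ⊗ y). Then this operation is commutative, with identity element e₁ = (1, 0, ..., 0)ᵀ, and distributes over addition. -/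
open Polynomial Matrix

/-- the product x·y := (I C ... C^{n-1})(x ⊗ y) on Rⁿ is commutative,
has identity e₁ = (1,0,...,0)ᵀ, and distributes over addition. -/
theorem Rn_product_comm_unital_distrib
    {R : Type*} [CommRing R] (n : ℕ) (hn : 0 < n) (f : R[X])
    (hf : f.Monic) (hdeg : f.natDegree = n)
    (C : Matrix (Fin n) (Fin n) R) (hC : C = companionM n f)
    (mul : (Fin n → R) → (Fin n → R) → (Fin n → R))
    (hmul : ∀ x y, mul x y = (powBlocks C).mulVec (kron x y)) :
    (∀ x y, mul x y = mul y x) ∧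
    (∀ x, mul (Pi.single (⟨0, hn⟩ : Fin n) (1 : R)) x = x) ∧
    (∀ x, mul x (Pi.single (⟨0, hn⟩ : Fin n) (1 : R)) = x) ∧
    (∀ x y z, mul x (y + z) = mul x y + mul x z) ∧
    (∀ x y z, mul (x + y) z = mul x z + mul y z) := by
  -- C^k e₀ = e_k for k < n
  have pow_e0 : ∀ k : ℕ, k < n → ∀ l : Fin n,
      (C ^ k) l ⟨0, hn⟩ = if (l : ℕ) = k then 1 else 0 := by
    intro k
    induction k with
    | zero =>
      intro _ l
      simp [Matrix.one_apply, Fin.ext_iff]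
    | succ k ih =>
      intro hk l
      have hk' : k < n := by omega
      rw [pow_succ', Matrix.mul_apply]
      have h1 : ∀ m : Fin n, C l m * (C ^ k) m ⟨0, hn⟩ =
          if m = (⟨k, hk'⟩ : Fin n) then C l m else 0 := by
        intro m
        rw [ih hk' m]
        by_cases h : (m : ℕ) = k
        · simp [h, Fin.ext_iff]
        · simp [h, Fin.ext_iff]
      rw [Finset.sum_congr rfl fun m _ => h1 m, Finset.sum_ite_eq']
      have hkn : k ≠ n - 1 := by omega
      simp [hC, companionM, hkn]
  -- symmetry key: (C^k)_{i j} = (C^{j+k})_{i 0}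
  have key : ∀ (i j : Fin n) (k : Fin n),
      (C ^ (k : ℕ)) i j = (C ^ ((j : ℕ) + (k : ℕ))) i ⟨0, hn⟩ := by
    intro i j k
    rw [add_comm, pow_add, Matrix.mul_apply]
    have h1 : ∀ m : Fin n, (C ^ (k : ℕ)) i m * (C ^ (j : ℕ)) m ⟨0, hn⟩ =
        if m = j then (C ^ (k : ℕ)) i m else 0 := by
      intro m
      rw [pow_e0 (j : ℕ) j.isLt m]
      by_cases h : (m : ℕ) = (j : ℕ)
      · simp [h, Fin.ext_iff]
      · simp [h, Fin.ext_iff]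
    rw [Finset.sum_congr rfl fun m _ => h1 m, Finset.sum_ite_eq']
    simp
  have mval : ∀ x y (i : Fin n), mul x y i = ∑ j : Fin n, ∑ k : Fin n,
      (C ^ ((j : ℕ) + (k : ℕ))) i ⟨0, hn⟩ * (x j * y k) := by
    intro x y i
    rw [hmul]
    simp only [Matrix.mulVec, dotProduct, powBlocks, kron]
    rw [Fintype.sum_prod_type]
    exact Finset.sum_congr rfl fun j _ => Finset.sum_congr rfl fun k _ => by rw [key]
  refine ⟨?_, ?_, ?_, ?_, ?_⟩
  · intro x y
    funext i
    rw [mval, mval, Finset.sum_comm]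
    refine Finset.sum_congr rfl fun k _ => Finset.sum_congr rfl fun j _ => ?_
    rw [add_comm (j : ℕ) (k : ℕ)]
    ring
  · intro x
    funext i
    rw [mval]
    have h1 : ∀ j : Fin n, (∑ k : Fin n, (C ^ ((j : ℕ) + (k : ℕ))) i ⟨0, hn⟩ *
        ((Pi.single (⟨0, hn⟩ : Fin n) (1 : R) : Fin n → R) j * x k)) =
        if j = (⟨0, hn⟩ : Fin n) then ∑ k : Fin n, (C ^ (k : ℕ)) i ⟨0, hn⟩ * x k else 0 := by
      intro j
      by_cases h : j = (⟨0, hn⟩ : Fin n)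
      · subst h
        simp
      · simp [Pi.single_apply, h]
    rw [Finset.sum_congr rfl fun j _ => h1 j, Finset.sum_ite_eq']
    simp only [Finset.mem_univ, if_true]
    have h2 : ∀ k : Fin n, (C ^ (k : ℕ)) i ⟨0, hn⟩ * x k =
        if k = i then x k else 0 := by
      intro k
      rw [pow_e0 (k : ℕ) k.isLt i]
      by_cases h : (i : ℕ) = (k : ℕ)
      · simp [Fin.ext_iff, h]
      · have : ¬ (k = i) := fun hh => h (by rw [hh])
        simp [h, this]
    rw [Finset.sum_congr rfl fun k _ => h2 k, Finset.sum_ite_eq']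
    simp
  · intro x
    funext i
    rw [mval]
    have h1 : ∀ j : Fin n, (∑ k : Fin n, (C ^ ((j : ℕ) + (k : ℕ))) i ⟨0, hn⟩ *
        (x j * (Pi.single (⟨0, hn⟩ : Fin n) (1 : R) : Fin n → R) k)) =
        (C ^ (j : ℕ)) i ⟨0, hn⟩ * x j := by
      intro j
      have h2 : ∀ k : Fin n, (C ^ ((j : ℕ) + (k : ℕ))) i ⟨0, hn⟩ *
          (x j * (Pi.single (⟨0, hn⟩ : Fin n) (1 : R) : Fin n → R) k) =
          if k = (⟨0, hn⟩ : Fin n) then (C ^ (j : ℕ)) i ⟨0, hn⟩ * x j else 0 := by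
        intro k
        by_cases h : k = (⟨0, hn⟩ : Fin n)
        · subst h; simp
        · simp [Pi.single_apply, h]
      rw [Finset.sum_congr rfl fun k _ => h2 k, Finset.sum_ite_eq']
      simp
    rw [Finset.sum_congr rfl fun j _ => h1 j]
    have h3 : ∀ j : Fin n, (C ^ (j : ℕ)) i ⟨0, hn⟩ * x j =
        if j = i then x j else 0 := by
      intro j
      rw [pow_e0 (j : ℕ) j.isLt i]
      by_cases h : (i : ℕ) = (j : ℕ)
      · simp [Fin.ext_iff, h]
      · have : ¬ (j = i) := fun hh => h (by rw [hh])
        simp [h, this]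
    rw [Finset.sum_congr rfl fun j _ => h3 j, Finset.sum_ite_eq']
    simp
  · intro x y z
    have : kron x (y + z) = kron x y + kron x z := by
      funext p; simp [kron, mul_add]
    rw [hmul, hmul, hmul, this, Matrix.mulVec_add]
  · intro x y z
    have : kron (x + y) z = kron x z + kron y z := by
      funext p; simp [kron, add_mul]
    rw [hmul, hmul, hmul, this, Matrix.mulVec_add]
end
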